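/- Let G be a biconnected finite simple graph with n vertices and m edges (G is connected and G − v is connected for every vertex v), and suppose G admits a perfect cancellation ordering. Then G admits a graphic parity network of size m + n − 1. -/

import Mathlib

/-- Apply a CNOT gate `g = (control, target)` to a state `t : V → Finset V`:
the target wire receives the symmetric difference of the control and target terms,
all other wires are unchanged. -/
def applyGate {V : Type*} [DecidableEq V] (g : V × V) (t : V → Finset V) : V → Finset V :=
  fun w => if w = g.2 then symmDiff (t g.1) (t g.2) else t w

/-- Run a circuit (a list of CNOT gates) from the initial state `term v = {v}`. -/
def runCircuit {V : Type*} [DecidableEq V] (C : List (V × V)) : V → Finset V :=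
  C.foldl (fun t g => applyGate g t) (fun v => {v})

/-- `C` is a graphic parity network for the graph `G`:
every gate has distinct control and target, every edge `{u, v}` of `G` appears as the
term of some wire after some prefix of the circuit, and the final state is the initial
state. Its size is `C.length`. -/
def IsGPN {V : Type*} [DecidableEq V] (G : SimpleGraph V) (C : List (V × V)) : Prop :=
  (∀ g ∈ C, g.1 ≠ g.2) ∧
  (∀ u v : V, G.Adj u v → ∃ (k : ℕ) (w : V), runCircuit (C.take k) w = {u, v}) ∧
  (∀ v : V, runCircuit C v = {v})

/-- A set `U` is `σ`-linked if any two vertices of `U` that are consecutive in the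
restriction of the ordering `σ` to `U` are adjacent in `G`. -/
def SigmaLinked {V : Type*} (G : SimpleGraph V) {n : ℕ} (σ : V ≃ Fin n) (U : Set V) :
    Prop :=
  ∀ ⦃a b : V⦄, a ∈ U → b ∈ U → σ a < σ b →
    (∀ w ∈ U, ¬(σ a < σ w ∧ σ w < σ b)) → G.Adj a b

/-- The set of neighbors of `v` occurring after `v` in the ordering `σ`. -/
def NPlus {V : Type*} (G : SimpleGraph V) {n : ℕ} (σ : V ≃ Fin n) (v : V) : Set V :=
  {u | G.Adj v u ∧ σ v < σ u}

/-- `σ` is a perfect cancellation ordering of `G`: for every vertex `v` and every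
connected component `K` of `G − v`, the set `N⁺_σ(v) ∩ K` is `σ`-linked. -/
def IsPCO {V : Type*} [Fintype V] (G : SimpleGraph V)
    (σ : V ≃ Fin (Fintype.card V)) : Prop :=
  ∀ (v : V) (K : (G.induce {u : V | u ≠ v}).ConnectedComponent),
    SigmaLinked G σ (NPlus G σ v ∩ (Subtype.val '' K.supp))

/-- A perfect cancellation graph is a graph admitting a perfect cancellation ordering. -/
def PerfectCancellationGraph {V : Type*} [Fintype V] (G : SimpleGraph V) : Prop :=
  ∃ σ : V ≃ Fin (Fintype.card V), IsPCO G σ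

open Finset
set_option linter.unusedSectionVars false

section
variable {V : Type*} [Fintype V] [DecidableEq V]

open scoped Classical in
noncomputable def nup (G : SimpleGraph V) (f : V → ℕ) (v : V) : Finset V :=
  Finset.univ.filter (fun u => G.Adj v u ∧ f v < f u)

lemma mem_nup {G : SimpleGraph V} {f : V → ℕ} {v u : V} :
    u ∈ nup G f v ↔ G.Adj v u ∧ f v < f u := by
  classical
  simp [nup]

lemma chain_walk (G : SimpleGraph V) (f : V → ℕ)
    (hlink : ∀ v a b : V, a ∈ nup G f v → b ∈ nup G f v → f a < f b →
      (∀ w ∈ nup G f v, ¬(f a < f w ∧ f w < f b)) → G.Adj a b)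
    (hinj : Function.Injective f) :
    ∀ d v a b, a ∈ nup G f v → b ∈ nup G f v → f a ≤ f b → f b - f a ≤ d →
      ∃ w : G.Walk a b, ∀ x ∈ w.support, x ∈ nup G f v := by
  intro d
  induction d with
  | zero =>
    intro v a b ha hb hab hd
    have : f a = f b := by omega
    have : a = b := hinj this
    subst this
    exact ⟨SimpleGraph.Walk.nil, by intro x hx; simp at hx; subst hx; exact ha⟩
  | succ d ih =>
    intro v a b ha hb hab hd
    rcases eq_or_lt_of_le hab with h | h
    · have : a = b := hinj h
      subst this
      exact ⟨SimpleGraph.Walk.nil, by intro x hx; simp at hx; subst hx; exact ha⟩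
    · by_cases hbet : ∃ w ∈ nup G f v, f a < f w ∧ f w < f b
      · obtain ⟨w, hw, h1, h2⟩ := hbet
        obtain ⟨W1, hW1⟩ := ih v a w ha hw (le_of_lt h1) (by omega)
        obtain ⟨W2, hW2⟩ := ih v w b hw hb (le_of_lt h2) (by omega)
        refine ⟨W1.append W2, ?_⟩
        intro x hx
        rw [SimpleGraph.Walk.mem_support_append_iff] at hx
        rcases hx with hx | hx
        · exact hW1 x hx
        · exact hW2 x hx
      · push_neg at hbet
        have hadj : G.Adj a b := hlink v a b ha hb h (by intro w hw; have := hbet w hw; omega)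
        refine ⟨SimpleGraph.Walk.cons hadj SimpleGraph.Walk.nil, ?_⟩
        intro x hx
        simp [SimpleGraph.Walk.support_cons] at hx
        rcases hx with rfl | rfl
        · exact ha
        · exact hb

lemma surgery (G : SimpleGraph V) (f : V → ℕ)
    (hlink : ∀ v a b : V, a ∈ nup G f v → b ∈ nup G f v → f a < f b →
      (∀ w ∈ nup G f v, ¬(f a < f w ∧ f w < f b)) → G.Adj a b)
    (hinj : Function.Injective f) :
    ∀ (L : ℕ) (v x y : V) (w : G.Walk x y), w.length ≤ L → f v < f x → f v < f y →
      (∀ z ∈ w.support, f v ≤ f z) →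
      ∃ w' : G.Walk x y, ∀ z ∈ w'.support, f v < f z := by
  intro L
  induction L with
  | zero =>
    intro v x y w hlen hx hy hsupp
    cases w with
    | nil => exact ⟨SimpleGraph.Walk.nil, by intro z hz; simp at hz; subst hz; exact hx⟩
    | cons h p => simp [SimpleGraph.Walk.length_cons] at hlen
  | succ L ih =>
    intro v x y w hlen hx hy hsupp
    cases w with
    | nil => exact ⟨SimpleGraph.Walk.nil, by intro z hz; simp at hz; subst hz; exact hx⟩
    | @cons _ u _ h p =>
      rcases eq_or_ne u v with rfl | hu
      · -- u = v
        cases p with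
        | nil => exact absurd hy (lt_irrefl _)
        | @cons _ u2 _ h2 p2 =>
          have hu2v : u2 ≠ u := fun hh => by subst hh; exact G.irrefl h2
          have hu2 : f u < f u2 := by
            have hle : f u ≤ f u2 := hsupp u2 (by simp [SimpleGraph.Walk.support_cons])
            rcases lt_or_eq_of_le hle with hh | hh
            · exact hh
            · exact absurd (hinj hh.symm) hu2v
          have hxnup : x ∈ nup G f u := mem_nup.mpr ⟨h.symm, hx⟩
          have hu2nup : u2 ∈ nup G f u := mem_nup.mpr ⟨h2, hu2⟩
          have hchain : ∃ W : G.Walk x u2, ∀ z ∈ W.support, z ∈ nup G f u := by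
            rcases le_or_gt (f x) (f u2) with hle | hlt
            · exact chain_walk G f hlink hinj (f u2 - f x) u x u2 hxnup hu2nup hle le_rfl
            · obtain ⟨W, hW⟩ := chain_walk G f hlink hinj (f x - f u2) u u2 x hu2nup hxnup
                (le_of_lt hlt) le_rfl
              refine ⟨W.reverse, ?_⟩
              intro z hz
              rw [SimpleGraph.Walk.support_reverse] at hz
              exact hW z (List.mem_reverse.mp hz)
          obtain ⟨W, hW⟩ := hchain
          obtain ⟨W2, hW2⟩ : ∃ w' : G.Walk u2 y, ∀ z ∈ w'.support, f u < f z := by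
            apply ih u u2 y p2
            · have : p2.length + 2 ≤ L + 1 := by
                simpa [SimpleGraph.Walk.length_cons] using hlen
              omega
            · exact hu2
            · exact hy
            · intro z hz
              apply hsupp
              simp only [SimpleGraph.Walk.support_cons, List.mem_cons]
              right; right; exact hz
          · refine ⟨W.append W2, ?_⟩
            intro z hz
            rw [SimpleGraph.Walk.mem_support_append_iff] at hz
            rcases hz with hz | hz
            · exact (mem_nup.mp (hW z hz)).2
            · exact hW2 z hz
      · have hun : f v < f u := by
          have hle : f v ≤ f u := hsupp u (by simp [SimpleGraph.Walk.support_cons])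
          rcases lt_or_eq_of_le hle with hh | hh
          · exact hh
          · exact absurd (hinj hh.symm) hu
        obtain ⟨W2, hW2⟩ := ih v u y p (by simpa [SimpleGraph.Walk.length_cons] using hlen) hun hy
          (by intro z hz; exact hsupp z (by simp only [SimpleGraph.Walk.support_cons, List.mem_cons]; right; exact hz))
        refine ⟨SimpleGraph.Walk.cons h W2, ?_⟩
        intro z hz
        rw [SimpleGraph.Walk.support_cons] at hz
        rcases List.mem_cons.mp hz with rfl | hz
        · exact hx
        · exact hW2 z hz

lemma upper_walk (G : SimpleGraph V) (f : V → ℕ) (g : ℕ → V) {n : ℕ}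
    (hconn : G.Connected)
    (hlink : ∀ v a b : V, a ∈ nup G f v → b ∈ nup G f v → f a < f b →
      (∀ w ∈ nup G f v, ¬(f a < f w ∧ f w < f b)) → G.Adj a b)
    (hinj : Function.Injective f)
    (hfn : ∀ v, f v < n) (hfg : ∀ k, k < n → f (g k) = k) :
    ∀ (k : ℕ) (x y : V), k ≤ f x → k ≤ f y →
      ∃ w : G.Walk x y, ∀ z ∈ w.support, k ≤ f z := by
  intro k
  induction k with
  | zero =>
    intro x y _ _
    obtain ⟨w⟩ := hconn.preconnected x y
    exact ⟨w, fun z _ => Nat.zero_le _⟩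
  | succ k ih =>
    intro x y hx hy
    obtain ⟨w, hw⟩ := ih x y (by omega) (by omega)
    have hkn : k < n := lt_of_lt_of_le (Nat.lt_succ_self k) (le_trans hx (le_of_lt (hfn x)))
    set v := g k with hv
    have hfv : f v = k := hfg k hkn
    have hvx : f v < f x := by omega
    have hvy : f v < f y := by omega
    obtain ⟨w', hw'⟩ := surgery G f hlink hinj w.length v x y w le_rfl hvx hvy
      (fun z hz => by rw [hfv]; exact hw z hz)
    exact ⟨w', fun z hz => by have := hw' z hz; omega⟩

lemma nup_nonempty (G : SimpleGraph V) (f : V → ℕ) (g : ℕ → V) {n : ℕ}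
    (hconn : G.Connected)
    (hlink : ∀ v a b : V, a ∈ nup G f v → b ∈ nup G f v → f a < f b →
      (∀ w ∈ nup G f v, ¬(f a < f w ∧ f w < f b)) → G.Adj a b)
    (hinj : Function.Injective f)
    (hfn : ∀ v, f v < n) (hfg : ∀ k, k < n → f (g k) = k)
    (v : V) (hv : f v + 1 < n) : (nup G f v).Nonempty := by
  have hft : f (g (n - 1)) = n - 1 := hfg _ (by omega)
  obtain ⟨w, hw⟩ := upper_walk G f g hconn hlink hinj hfn hfg (f v) v (g (n - 1)) le_rfl (by omega)
  have hvt : v ≠ g (n - 1) := by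
    intro h
    rw [← h] at hft
    omega
  have hnil : ¬ w.Nil := SimpleGraph.Walk.not_nil_of_ne hvt
  have hadj : G.Adj v (w.getVert 1) := SimpleGraph.Walk.adj_snd hnil
  have hmem : w.getVert 1 ∈ w.support := by
    rw [SimpleGraph.Walk.mem_support_iff_exists_getVert]
    refine ⟨1, rfl, ?_⟩
    rw [SimpleGraph.Walk.not_nil_iff_lt_length] at hnil
    omega
  refine ⟨w.getVert 1, mem_nup.mpr ⟨hadj, ?_⟩⟩
  have h1 : f v ≤ f (w.getVert 1) := hw _ hmem
  rcases lt_or_eq_of_le h1 with hh | hh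
  · exact hh
  · exact absurd (hinj hh.symm) (fun he => G.irrefl (he ▸ hadj))

/-! ### Circuit definitions -/

open scoped Classical in
noncomputable def ctrlv (G : SimpleGraph V) (f : V → ℕ) (g : ℕ → V) (a b : V) : V :=
  if ((nup G f a).filter (fun u => f u < f b)).Nonempty then
    g (((nup G f a).filter (fun u => f u < f b)).sup f) else b

open scoped Classical in
noncomputable def gateOf (G : SimpleGraph V) (f : V → ℕ) (g : ℕ → V) (n k : ℕ) :
    Option (V × V) :=
  if G.Adj (g (n - 1 - k % n)) (g (k / n)) ∧ f (g (n - 1 - k % n)) < f (g (k / n)) then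
    some (ctrlv G f g (g (n - 1 - k % n)) (g (k / n)), g (n - 1 - k % n))
  else none

noncomputable def phase1 (G : SimpleGraph V) (f : V → ℕ) (g : ℕ → V) (n N : ℕ) :
    List (V × V) :=
  (List.range N).filterMap (gateOf G f g n)

noncomputable def gate2 (G : SimpleGraph V) (f : V → ℕ) (g : ℕ → V) (n j : ℕ) : V × V :=
  (g ((nup G f (g (n - 2 - j))).sup f), g (n - 2 - j))

noncomputable def phase2 (G : SimpleGraph V) (f : V → ℕ) (g : ℕ → V) (n : ℕ) :
    List (V × V) :=
  (List.range (n - 1)).map (gate2 G f g n)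

def pcode (f : V → ℕ) (n : ℕ) (x u : V) : ℕ := f u * n + (n - 1 - f x)

open scoped Classical in
noncomputable def procSet (G : SimpleGraph V) (f : V → ℕ) (n N : ℕ) (x : V) : Finset V :=
  (nup G f x).filter (fun u => pcode f n x u < N)

open scoped Classical in
noncomputable def stateAt (G : SimpleGraph V) (f : V → ℕ) (g : ℕ → V) (n N : ℕ) :
    V → Finset V := fun x =>
  if (procSet G f n N x).Nonempty then {x, g ((procSet G f n N x).sup f)} else {x}

lemma mem_procSet {G : SimpleGraph V} {f : V → ℕ} {n N : ℕ} {x u : V} :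
    u ∈ procSet G f n N x ↔ u ∈ nup G f x ∧ pcode f n x u < N := by
  classical
  simp [procSet, Finset.mem_filter]

lemma runCircuit_eq_foldl (C : List (V × V)) :
    runCircuit C = C.foldl (fun t g => applyGate g t) (fun v => {v}) := rfl

lemma foldl_append_run (C D : List (V × V)) (t : V → Finset V) :
    (C ++ D).foldl (fun t g => applyGate g t) t
      = D.foldl (fun t g => applyGate g t) (C.foldl (fun t g => applyGate g t) t) :=
  List.foldl_append

lemma phase1_succ (G : SimpleGraph V) (f : V → ℕ) (g : ℕ → V) (n N : ℕ) :
    phase1 G f g n (N + 1) = phase1 G f g n N ++ (gateOf G f g n N).toList := by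
  unfold phase1
  rw [List.range_succ, List.filterMap_append]
  cases h : gateOf G f g n N <;> simp [h]

/-! ### Arithmetic helpers -/

lemma decode_div_mod {n q r : ℕ} (hn : 0 < n) (hr : r < n) :
    (q * n + r) / n = q ∧ (q * n + r) % n = r := by
  constructor
  · rw [mul_comm, Nat.mul_add_div hn, Nat.div_eq_of_lt hr, add_zero]
  · rw [mul_comm, Nat.mul_add_mod, Nat.mod_eq_of_lt hr]


lemma symmDiff_single_single {a b : V} (hab : a ≠ b) :
    symmDiff ({b} : Finset V) {a} = {a, b} := by
  ext z
  simp only [Finset.mem_symmDiff, Finset.mem_singleton, Finset.mem_insert]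
  constructor
  · rintro (⟨rfl, h⟩ | ⟨rfl, h⟩) <;> tauto
  · rintro (rfl | rfl)
    · right; exact ⟨rfl, fun h => hab h⟩
    · left; exact ⟨rfl, fun h => hab h.symm⟩

lemma symmDiff_pair_pair {a b c : V} (hab : a ≠ b) (hac : a ≠ c) (hcb : c ≠ b) :
    symmDiff ({c, b} : Finset V) {a, c} = {a, b} := by
  ext z
  simp only [Finset.mem_symmDiff, Finset.mem_insert, Finset.mem_singleton]
  by_cases hza : z = a <;> by_cases hzb : z = b <;> by_cases hzc : z = c <;>
    simp_all <;> tauto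

lemma symmDiff_single_pair {x m : V} (h : m ≠ x) :
    symmDiff ({m} : Finset V) {x, m} = {x} := by
  ext z
  simp only [Finset.mem_symmDiff, Finset.mem_insert, Finset.mem_singleton]
  by_cases hzm : z = m <;> by_cases hzx : z = x <;> simp_all <;> tauto

lemma decode_eq {G : SimpleGraph V} {f : V → ℕ} {g : ℕ → V} {n : ℕ}
    (hn : 0 < n) (hfn : ∀ v, f v < n) (hgf : ∀ v, g (f v) = v)
    {x u : V} (hu : u ∈ nup G f x) {k : ℕ} (hk : pcode f n x u = k) :
    f x = n - 1 - k % n ∧ f u = k / n ∧ x = g (n - 1 - k % n) ∧ u = g (k / n) := by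
  have hfx := hfn x
  have hr : n - 1 - f x < n := by omega
  obtain ⟨hdiv, hmod⟩ := decode_div_mod (q := f u) hn hr
  rw [show f u * n + (n - 1 - f x) = pcode f n x u from rfl, hk] at hdiv hmod
  have h1 : f x = n - 1 - k % n := by omega
  have h2 : f u = k / n := hdiv.symm
  exact ⟨h1, h2, by rw [← h1, hgf], by rw [← h2, hgf]⟩

lemma procSet_zero {G : SimpleGraph V} {f : V → ℕ} {n : ℕ} (x : V) :
    procSet G f n 0 x = ∅ := by
  classical
  rw [Finset.eq_empty_iff_forall_notMem]
  intro u hu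
  rw [mem_procSet] at hu
  omega

lemma procSet_succ_ne {G : SimpleGraph V} {f : V → ℕ} {g : ℕ → V} {n N : ℕ}
    (hn : 0 < n) (hfn : ∀ v, f v < n) (hgf : ∀ v, g (f v) = v)
    {x : V} (hx : x ≠ g (n - 1 - N % n)) :
    procSet G f n (N + 1) x = procSet G f n N x := by
  ext u
  simp only [mem_procSet]
  constructor
  · rintro ⟨h1, h2⟩
    refine ⟨h1, ?_⟩
    rcases Nat.lt_succ_iff_lt_or_eq.mp h2 with h | h
    · exact h
    · exact absurd (decode_eq hn hfn hgf h1 h).2.2.1 hx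
  · rintro ⟨h1, h2⟩
    exact ⟨h1, by omega⟩

lemma procSet_at_code {G : SimpleGraph V} {f : V → ℕ} {n N : ℕ}
    (hn : 0 < n) {a b : V} (hN : pcode f n a b = N) :
    procSet G f n N a = (nup G f a).filter (fun u => f u < f b) := by
  classical
  ext u
  simp only [mem_procSet, Finset.mem_filter]
  refine and_congr_right fun _ => ?_
  rw [← hN]
  show f u * n + (n - 1 - f a) < f b * n + (n - 1 - f a) ↔ f u < f b
  rw [Nat.add_lt_add_iff_right, Nat.mul_lt_mul_right hn]

lemma procSet_insert {G : SimpleGraph V} {f : V → ℕ} {g : ℕ → V} {n N : ℕ}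
    (hn : 0 < n) (hfn : ∀ v, f v < n) (hgf : ∀ v, g (f v) = v)
    {a b : V} (hb : b ∈ nup G f a) (hN : pcode f n a b = N) :
    procSet G f n (N + 1) a = insert b ((nup G f a).filter (fun u => f u < f b)) := by
  classical
  ext u
  simp only [mem_procSet, Finset.mem_insert, Finset.mem_filter]
  constructor
  · rintro ⟨h1, h2⟩
    rcases Nat.lt_succ_iff_lt_or_eq.mp h2 with h | h
    · right
      refine ⟨h1, ?_⟩
      rw [← hN] at h
      have := (Nat.add_lt_add_iff_right (k := n - 1 - f a)).mp h
      exact (Nat.mul_lt_mul_right hn).mp this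
    · left
      have hd1 := (decode_eq hn hfn hgf h1 h).2.2.2
      have hd2 := (decode_eq hn hfn hgf hb hN).2.2.2
      rw [hd1, hd2]
  · rintro (rfl | ⟨h1, h2⟩)
    · exact ⟨hb, by omega⟩
    · refine ⟨h1, ?_⟩
      have : pcode f n a u < pcode f n a b := by
        show f u * n + (n - 1 - f a) < f b * n + (n - 1 - f a)
        rw [Nat.add_lt_add_iff_right, Nat.mul_lt_mul_right hn]
        exact h2
      omega

lemma procSet_empty_high {G : SimpleGraph V} {f : V → ℕ} {n N : ℕ} {b : V}
    (hN : N ≤ f b * n + n) :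
    procSet G f n N b = ∅ := by
  classical
  rw [Finset.eq_empty_iff_forall_notMem]
  intro u hu
  rw [mem_procSet, mem_nup] at hu
  obtain ⟨⟨_, hfb⟩, hcode⟩ := hu
  have h1 : (f b + 1) * n ≤ f u * n := Nat.mul_le_mul_right n (by omega)
  have h2 : (f b + 1) * n = f b * n + n := by ring
  have h3 : f u * n ≤ pcode f n b u := Nat.le_add_right _ _
  omega


lemma inv1 (G : SimpleGraph V) (f : V → ℕ) (g : ℕ → V) (n : ℕ)
    (hn : 0 < n) (hfn : ∀ v, f v < n) (hgf : ∀ v, g (f v) = v)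
    (hfg : ∀ k, k < n → f (g k) = k)
    (hlink : ∀ v a b : V, a ∈ nup G f v → b ∈ nup G f v → f a < f b →
      (∀ w ∈ nup G f v, ¬(f a < f w ∧ f w < f b)) → G.Adj a b) :
    ∀ N, N ≤ n * n →
      (phase1 G f g n N).foldl (fun t p => applyGate p t) (fun v => {v})
        = stateAt G f g n N := by
  classical
  intro N
  induction N with
  | zero =>
    intro _
    funext x
    rw [stateAt]
    rw [if_neg (by rw [procSet_zero]; simp)]
    simp [phase1]
  | succ N ih =>
    intro hN
    rw [phase1_succ, foldl_append_run, ih (by omega)]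
    cases hgate : gateOf G f g n N with
    | none =>
      have hnoedge : ∀ x u : V, u ∈ nup G f x → pcode f n x u ≠ N := by
        intro x u hu hk
        obtain ⟨h1, h2, h3, h4⟩ := decode_eq hn hfn hgf hu hk
        have hcond : G.Adj (g (n - 1 - N % n)) (g (N / n)) ∧
            f (g (n - 1 - N % n)) < f (g (N / n)) := by
          rw [← h3, ← h4]
          exact ⟨(mem_nup.mp hu).1, (mem_nup.mp hu).2⟩
        rw [gateOf, if_pos hcond] at hgate
        exact Option.some_ne_none _ hgate
      simp only [Option.toList_none, List.foldl_nil]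
      funext x
      have hproc : procSet G f n (N + 1) x = procSet G f n N x := by
        ext u
        simp only [mem_procSet]
        constructor
        · rintro ⟨h1, h2⟩
          refine ⟨h1, ?_⟩
          rcases Nat.lt_succ_iff_lt_or_eq.mp h2 with h | h
          · exact h
          · exact absurd h (hnoedge x u h1)
        · rintro ⟨h1, h2⟩; exact ⟨h1, by omega⟩
      rw [stateAt, stateAt, hproc]
    | some p =>
      by_cases hcond : G.Adj (g (n - 1 - N % n)) (g (N / n)) ∧
          f (g (n - 1 - N % n)) < f (g (N / n))
      case neg => rw [gateOf, if_neg hcond] at hgate; exact absurd hgate (by simp)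
      set a := g (n - 1 - N % n) with ha
      set b := g (N / n) with hb
      have hp : p = (ctrlv G f g a b, a) := by
        rw [gateOf, if_pos hcond] at hgate
        exact (Option.some.inj hgate).symm
      have hmod : N % n < n := Nat.mod_lt _ hn
      have hfa : f a = n - 1 - N % n := hfg _ (by omega)
      have hfb : f b = N / n := hfg _ ((Nat.div_lt_iff_lt_mul hn).mpr (by omega))
      have hcode : pcode f n a b = N := by
        show f b * n + (n - 1 - f a) = N
        rw [hfa, hfb]
        have h1 : n * (N / n) + N % n = N := Nat.div_add_mod N n
        have h2 : n - 1 - (n - 1 - N % n) = N % n := by omega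
        rw [h2, mul_comm]
        exact h1
      have hadj : G.Adj a b := hcond.1
      have hab : f a < f b := hcond.2
      have hbnup : b ∈ nup G f a := mem_nup.mpr ⟨hadj, hab⟩
      have hne_ab : a ≠ b := fun h => by rw [h] at hab; exact lt_irrefl _ hab
      rw [hp]
      simp only [Option.toList_some, List.foldl_cons, List.foldl_nil]
      funext x
      simp only [applyGate]
      by_cases hx : x = a
      case neg =>
        rw [if_neg (by simpa using hx)]
        have hproc := procSet_succ_ne (G := G) hn hfn hgf (x := x) (by rw [← ha]; exact hx)
        rw [stateAt, stateAt, hproc]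
      rw [hx]
      rw [if_pos rfl]
      have hSA : procSet G f n N a = ((nup G f a).filter (fun u => f u < f b)) := procSet_at_code hn hcode
      have hins : procSet G f n (N + 1) a = insert b ((nup G f a).filter (fun u => f u < f b)) := procSet_insert hn hfn hgf hbnup hcode
      have hSb : ∀ u ∈ ((nup G f a).filter (fun u => f u < f b)), f u ≤ f b := by
        intro u hu
        exact le_of_lt (Finset.mem_filter.mp hu).2
      have hsup : (insert b ((nup G f a).filter (fun u => f u < f b))).sup f = f b := by
        rw [Finset.sup_insert]
        exact sup_eq_left.mpr (Finset.sup_le hSb)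
      have hRHS : stateAt G f g n (N + 1) a = {a, b} := by
        rw [stateAt, hins, if_pos ⟨b, Finset.mem_insert_self _ _⟩, hsup, hgf]
      rw [hRHS]
      have hcodeN : f b * n + (n - 1 - f a) = N := hcode
      by_cases hSne : (((nup G f a).filter (fun u => f u < f b))).Nonempty
      case neg =>
        have hcb : ctrlv G f g a b = b := by rw [ctrlv, if_neg hSne]
        have hstx : stateAt G f g n N a = {a} := by
          rw [stateAt, hSA, if_neg hSne]
        have hstb : stateAt G f g n N b = {b} := by
          rw [stateAt, procSet_empty_high (by omega : N ≤ f b * n + n)]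
          simp
        simp only [hcb]
        rw [hstb, hstx, symmDiff_single_single hne_ab]
      · obtain ⟨u0, hu0S, hu0⟩ := Finset.exists_mem_eq_sup ((nup G f a).filter (fun u => f u < f b)) hSne f
        have hc : ctrlv G f g a b = u0 := by
          rw [ctrlv, if_pos hSne, hu0, hgf]
        obtain ⟨hu0nup, hu0b⟩ := Finset.mem_filter.mp hu0S
        have hxu0 : f a < f u0 := (mem_nup.mp hu0nup).2
        have hstx : stateAt G f g n N a = {a, u0} := by
          rw [stateAt, hSA, if_pos hSne, hu0, hgf]
        have hadj0 : G.Adj u0 b := by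
          apply hlink a u0 b hu0nup hbnup hu0b
          intro w hw hww
          obtain ⟨hw1, hw2⟩ := hww
          have hwS : w ∈ ((nup G f a).filter (fun u => f u < f b)) := Finset.mem_filter.mpr ⟨hw, hw2⟩
          have hle := Finset.le_sup (f := f) hwS
          rw [hu0] at hle
          omega
        have hb0nup : b ∈ nup G f u0 := mem_nup.mpr ⟨hadj0, hu0b⟩
        have hbproc : b ∈ procSet G f n N u0 := by
          rw [mem_procSet]
          refine ⟨hb0nup, ?_⟩
          show f b * n + (n - 1 - f u0) < N
          have hlt : n - 1 - f u0 < n - 1 - f a := by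
            have := hfn u0
            omega
          calc f b * n + (n - 1 - f u0) < f b * n + (n - 1 - f a) :=
                Nat.add_lt_add_left hlt _
            _ = N := hcode
        have hsup0 : (procSet G f n N u0).sup f = f b := by
          apply le_antisymm
          · apply Finset.sup_le
            intro u hu
            rw [mem_procSet] at hu
            obtain ⟨hu1, hu2⟩ := hu
            by_contra hgt
            push_neg at hgt
            have h1 : (f b + 1) * n ≤ f u * n := Nat.mul_le_mul_right n (by omega)
            have h2 : (f b + 1) * n = f b * n + n := by ring
            have h3 : f u * n ≤ pcode f n u0 u := Nat.le_add_right _ _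
            have h4 : pcode f n u0 u < N := hu2
            omega
          · exact Finset.le_sup hbproc
        have hstu0 : stateAt G f g n N u0 = {u0, b} := by
          rw [stateAt, if_pos ⟨b, hbproc⟩, hsup0, hgf]
        simp only [hc]
        rw [hstu0, hstx]
        exact symmDiff_pair_pair hne_ab
          (fun h => by rw [h] at hxu0; exact lt_irrefl _ hxu0)
          (fun h => by rw [h] at hu0b; exact lt_irrefl _ hu0b)


lemma procSet_all {G : SimpleGraph V} {f : V → ℕ} {n : ℕ}
    (hn : 0 < n) (hfn : ∀ v, f v < n) (x : V) :
    procSet G f n (n * n) x = nup G f x := by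
  ext u
  rw [mem_procSet]
  refine ⟨fun h => h.1, fun h => ⟨h, ?_⟩⟩
  show f u * n + (n - 1 - f x) < n * n
  obtain ⟨m, rfl⟩ : ∃ m, n = m + 1 := ⟨n - 1, by omega⟩
  have h1 : f u * (m + 1) ≤ m * (m + 1) := Nat.mul_le_mul_right _ (by have := hfn u; omega)
  have h2 : m * (m + 1) + (m + 1) = (m + 1) * (m + 1) := by ring
  omega

lemma nup_empty_top {G : SimpleGraph V} {f : V → ℕ} {n : ℕ}
    (hfn : ∀ v, f v < n) {x : V} (hx : n - 1 ≤ f x) : nup G f x = ∅ := by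
  rw [Finset.eq_empty_iff_forall_notMem]
  intro u hu
  rw [mem_nup] at hu
  have := hfn u
  omega

lemma inv2 (G : SimpleGraph V) (f : V → ℕ) (g : ℕ → V) (n : ℕ)
    (hn2 : 2 ≤ n) (hfn : ∀ v, f v < n) (hgf : ∀ v, g (f v) = v)
    (hfg : ∀ k, k < n → f (g k) = k)
    (hconn : G.Connected)
    (hlink : ∀ v a b : V, a ∈ nup G f v → b ∈ nup G f v → f a < f b →
      (∀ w ∈ nup G f v, ¬(f a < f w ∧ f w < f b)) → G.Adj a b)
    (hinj : Function.Injective f) :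
    ∀ j ≤ n - 1,
      ((List.range j).map (gate2 G f g n)).foldl (fun t p => applyGate p t)
          (stateAt G f g n (n * n))
        = fun x => if n - 1 - j ≤ f x then ({x} : Finset V)
            else stateAt G f g n (n * n) x := by
  have hn : 0 < n := by omega
  intro j
  induction j with
  | zero =>
    intro _
    funext x
    simp only [List.range_zero, List.map_nil, List.foldl_nil, Nat.sub_zero]
    by_cases hx : n - 1 ≤ f x
    · rw [if_pos hx, stateAt, if_neg]
      rw [procSet_all hn hfn, nup_empty_top hfn hx]
      simp
    · rw [if_neg hx]
  | succ j ih =>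
    intro hj
    rw [List.range_succ, List.map_append, List.foldl_append, ih (by omega)]
    simp only [List.map_cons, List.map_nil, List.foldl_cons, List.foldl_nil]
    have hfx0 : f (g (n - 2 - j)) = n - 2 - j := hfg _ (by omega)
    have hne : (nup G f (g (n - 2 - j))).Nonempty := by
      apply nup_nonempty G f g hconn hlink hinj hfn hfg
      omega
    obtain ⟨m0, hm0mem, hm0⟩ := Finset.exists_mem_eq_sup (nup G f (g (n - 2 - j))) hne f
    have hx0m0 : f (g (n - 2 - j)) < f m0 := (mem_nup.mp hm0mem).2
    have hgate2 : gate2 G f g n j = (m0, g (n - 2 - j)) := by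
      rw [gate2, hm0, hgf]
    rw [hgate2]
    funext x
    simp only [applyGate]
    by_cases hx : x = g (n - 2 - j)
    · subst hx
      rw [if_pos rfl]
      have ht1 : (if n - 1 - j ≤ f m0 then ({m0} : Finset V)
          else stateAt G f g n (n * n) m0) = {m0} := by
        rw [if_pos (by omega)]
      have ht2 : (if n - 1 - j ≤ f (g (n - 2 - j)) then ({g (n - 2 - j)} : Finset V)
          else stateAt G f g n (n * n) (g (n - 2 - j)))
          = {g (n - 2 - j), m0} := by
        rw [if_neg (by omega), stateAt, procSet_all hn hfn, if_pos hne, hm0, hgf]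
      rw [ht1, ht2, if_pos (by omega), symmDiff_single_pair]
      intro h
      rw [h] at hx0m0
      exact lt_irrefl _ hx0m0
    · rw [if_neg hx]
      have hfx : f x ≠ n - 2 - j := by
        intro h
        apply hx
        rw [← hgf x, h]
      by_cases h1 : n - 1 - j ≤ f x
      · rw [if_pos h1, if_pos (by omega)]
      · rw [if_neg h1, if_neg (by omega)]

lemma gate_none_no_code {G : SimpleGraph V} {f : V → ℕ} {g : ℕ → V} {n N : ℕ}
    (hn : 0 < n) (hfn : ∀ v, f v < n) (hgf : ∀ v, g (f v) = v)
    (hgate : gateOf G f g n N = none) :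
    ∀ x u : V, u ∈ nup G f x → pcode f n x u ≠ N := by
  intro x u hu hk
  obtain ⟨h1, h2, h3, h4⟩ := decode_eq hn hfn hgf hu hk
  have hcond : G.Adj (g (n - 1 - N % n)) (g (N / n)) ∧
      f (g (n - 1 - N % n)) < f (g (N / n)) := by
    rw [← h3, ← h4]
    exact ⟨(mem_nup.mp hu).1, (mem_nup.mp hu).2⟩
  rw [gateOf, if_pos hcond] at hgate
  exact Option.some_ne_none _ hgate

lemma gate_some_spec {G : SimpleGraph V} {f : V → ℕ} {g : ℕ → V} {n N : ℕ} {p : V × V}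
    (hn : 0 < n) (hfn : ∀ v, f v < n) (hfg : ∀ k, k < n → f (g k) = k)
    (hN : N < n * n) (hgate : gateOf G f g n N = some p) :
    p = (ctrlv G f g (g (n - 1 - N % n)) (g (N / n)), g (n - 1 - N % n)) ∧
      G.Adj (g (n - 1 - N % n)) (g (N / n)) ∧
      f (g (n - 1 - N % n)) < f (g (N / n)) ∧
      pcode f n (g (n - 1 - N % n)) (g (N / n)) = N := by
  classical
  by_cases hcond : G.Adj (g (n - 1 - N % n)) (g (N / n)) ∧
      f (g (n - 1 - N % n)) < f (g (N / n))
  · rw [gateOf, if_pos hcond] at hgate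
    have hp := (Option.some.inj hgate).symm
    have hmod : N % n < n := Nat.mod_lt _ hn
    have hfa : f (g (n - 1 - N % n)) = n - 1 - N % n := hfg _ (by omega)
    have hfb : f (g (N / n)) = N / n := hfg _ ((Nat.div_lt_iff_lt_mul hn).mpr (by omega))
    refine ⟨hp, hcond.1, hcond.2, ?_⟩
    show f (g (N / n)) * n + (n - 1 - f (g (n - 1 - N % n))) = N
    rw [hfa, hfb]
    have h1 : n * (N / n) + N % n = N := Nat.div_add_mod N n
    have h2 : n - 1 - (n - 1 - N % n) = N % n := by omega
    rw [h2, mul_comm]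
    exact h1
  · rw [gateOf, if_neg hcond] at hgate
    exact absurd hgate (by simp)


open scoped Classical in
lemma len1 (G : SimpleGraph V) (f : V → ℕ) (g : ℕ → V) (n : ℕ)
    (hn : 0 < n) (hfn : ∀ v, f v < n) (hgf : ∀ v, g (f v) = v)
    (hfg : ∀ k, k < n → f (g k) = k) :
    ∀ N ≤ n * n, (phase1 G f g n N).length =
      ((Finset.univ.filter (fun p : V × V => G.Adj p.1 p.2 ∧ f p.1 < f p.2)).filter
        (fun p => pcode f n p.1 p.2 < N)).card := by
  intro N
  induction N with
  | zero =>
    intro _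
    simp [phase1]
  | succ N ih =>
    intro hN
    have hmemE : ∀ p : V × V,
        p ∈ Finset.univ.filter (fun p : V × V => G.Adj p.1 p.2 ∧ f p.1 < f p.2) →
        p.2 ∈ nup G f p.1 := by
      intro p hp
      rw [Finset.mem_filter] at hp
      exact mem_nup.mpr ⟨hp.2.1, hp.2.2⟩
    rw [phase1_succ, List.length_append, ih (by omega)]
    cases hgate : gateOf G f g n N with
    | none =>
      have hnoedge := gate_none_no_code hn hfn hgf hgate
      simp only [Option.toList_none, List.length_nil, add_zero]
      congr 1
      ext p
      simp only [Finset.mem_filter, Finset.mem_univ, true_and]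
      constructor
      · rintro ⟨h1, h2⟩
        exact ⟨h1, by omega⟩
      · rintro ⟨h1, h2⟩
        refine ⟨h1, ?_⟩
        rcases Nat.lt_succ_iff_lt_or_eq.mp h2 with h | h
        · exact h
        · exact absurd h (hnoedge p.1 p.2 (mem_nup.mpr ⟨h1.1, h1.2⟩))
    | some p =>
      obtain ⟨hp, hadj, hab, hcode⟩ := gate_some_spec hn hfn hfg (by omega) hgate
      simp only [Option.toList_some, List.length_singleton]
      have hins : (Finset.univ.filter
            (fun p : V × V => G.Adj p.1 p.2 ∧ f p.1 < f p.2)).filter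
            (fun p => pcode f n p.1 p.2 < N + 1)
          = insert (g (n - 1 - N % n), g (N / n))
            ((Finset.univ.filter
              (fun p : V × V => G.Adj p.1 p.2 ∧ f p.1 < f p.2)).filter
              (fun p => pcode f n p.1 p.2 < N)) := by
        ext q
        simp only [Finset.mem_filter, Finset.mem_insert, Finset.mem_univ, true_and]
        constructor
        · rintro ⟨h1, h2⟩
          rcases Nat.lt_succ_iff_lt_or_eq.mp h2 with h | h
          · right; exact ⟨h1, h⟩
          · left
            have hq2 : q.2 ∈ nup G f q.1 := mem_nup.mpr ⟨h1.1, h1.2⟩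
            obtain ⟨e1, e2, e3, e4⟩ := decode_eq hn hfn hgf hq2 h
            exact Prod.ext e3 e4
        · rintro (rfl | ⟨h1, h2⟩)
          · refine ⟨⟨hadj, hab⟩, ?_⟩
            show pcode f n (g (n - 1 - N % n)) (g (N / n)) < N + 1
            omega
          · exact ⟨h1, by omega⟩
      rw [hins, Finset.card_insert_of_notMem]
      intro hmem
      rw [Finset.mem_filter] at hmem
      have : pcode f n (g (n - 1 - N % n)) (g (N / n)) < N := hmem.2
      omega

lemma phase1_prefix (G : SimpleGraph V) (f : V → ℕ) (g : ℕ → V) (n : ℕ) :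
    ∀ N M, N ≤ M → ∃ L, phase1 G f g n M = phase1 G f g n N ++ L := by
  intro N M hNM
  obtain ⟨d, rfl⟩ : ∃ d, M = N + d := ⟨M - N, by omega⟩
  clear hNM
  induction d with
  | zero => exact ⟨[], by simp⟩
  | succ d ihd =>
    obtain ⟨L, hL⟩ := ihd
    refine ⟨L ++ (gateOf G f g n (N + d)).toList, ?_⟩
    rw [show N + (d + 1) = (N + d) + 1 from rfl, phase1_succ, hL, List.append_assoc]

lemma gate_valid (G : SimpleGraph V) (f : V → ℕ) (g : ℕ → V) (n : ℕ)
    (hn2 : 2 ≤ n) (hfn : ∀ v, f v < n) (hgf : ∀ v, g (f v) = v)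
    (hfg : ∀ k, k < n → f (g k) = k)
    (hconn : G.Connected)
    (hlink : ∀ v a b : V, a ∈ nup G f v → b ∈ nup G f v → f a < f b →
      (∀ w ∈ nup G f v, ¬(f a < f w ∧ f w < f b)) → G.Adj a b)
    (hinj : Function.Injective f) :
    ∀ p ∈ phase1 G f g n (n * n) ++ phase2 G f g n, p.1 ≠ p.2 := by
  classical
  have hn : 0 < n := by omega
  intro p hp
  rw [List.mem_append] at hp
  rcases hp with hp | hp
  · rw [phase1, List.mem_filterMap] at hp
    obtain ⟨k, hk, hgate⟩ := hp
    rw [List.mem_range] at hk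
    obtain ⟨hpe, hadj, hab, hcode⟩ := gate_some_spec hn hfn hfg hk hgate
    subst hpe
    show ctrlv G f g (g (n - 1 - k % n)) (g (k / n)) ≠ g (n - 1 - k % n)
    rw [ctrlv]
    split_ifs with hcase
    · obtain ⟨u0, hu0S, hu0⟩ := Finset.exists_mem_eq_sup _ hcase f
      rw [hu0, hgf]
      obtain ⟨hu0nup, _⟩ := Finset.mem_filter.mp hu0S
      have := (mem_nup.mp hu0nup).2
      intro h
      rw [h] at this
      exact lt_irrefl _ this
    · intro h
      rw [h] at hab
      exact lt_irrefl _ hab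
  · rw [phase2, List.mem_map] at hp
    obtain ⟨j, hj, hgate⟩ := hp
    rw [List.mem_range] at hj
    have hfx0 : f (g (n - 2 - j)) = n - 2 - j := hfg _ (by omega)
    have hne : (nup G f (g (n - 2 - j))).Nonempty := by
      apply nup_nonempty G f g hconn hlink hinj hfn hfg
      omega
    obtain ⟨m0, hm0mem, hm0⟩ := Finset.exists_mem_eq_sup _ hne f
    rw [← hgate, gate2, hm0, hgf]
    intro h
    have h2 : m0 = g (n - 2 - j) := h
    have := (mem_nup.mp hm0mem).2
    rw [h2] at this
    exact lt_irrefl _ this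

lemma run_final (G : SimpleGraph V) (f : V → ℕ) (g : ℕ → V) (n : ℕ)
    (hn2 : 2 ≤ n) (hfn : ∀ v, f v < n) (hgf : ∀ v, g (f v) = v)
    (hfg : ∀ k, k < n → f (g k) = k)
    (hconn : G.Connected)
    (hlink : ∀ v a b : V, a ∈ nup G f v → b ∈ nup G f v → f a < f b →
      (∀ w ∈ nup G f v, ¬(f a < f w ∧ f w < f b)) → G.Adj a b)
    (hinj : Function.Injective f) :
    ∀ v, runCircuit (phase1 G f g n (n * n) ++ phase2 G f g n) v = {v} := by
  have hn : 0 < n := by omega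
  intro v
  rw [runCircuit_eq_foldl, foldl_append_run,
    inv1 G f g n hn hfn hgf hfg hlink (n * n) le_rfl]
  rw [phase2, inv2 G f g n hn2 hfn hgf hfg hconn hlink hinj (n - 1) le_rfl]
  change (if n - 1 - (n - 1) ≤ f v then ({v} : Finset V)
    else stateAt G f g n (n * n) v) = {v}
  rw [if_pos (by omega)]

lemma coverage (G : SimpleGraph V) (f : V → ℕ) (g : ℕ → V) (n : ℕ)
    (hn2 : 2 ≤ n) (hfn : ∀ v, f v < n) (hgf : ∀ v, g (f v) = v)
    (hfg : ∀ k, k < n → f (g k) = k)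
    (hlink : ∀ v a b : V, a ∈ nup G f v → b ∈ nup G f v → f a < f b →
      (∀ w ∈ nup G f v, ¬(f a < f w ∧ f w < f b)) → G.Adj a b)
    {a b : V} (hadj : G.Adj a b) (hab : f a < f b) :
    ∃ (k : ℕ) (w : V),
      runCircuit ((phase1 G f g n (n * n) ++ phase2 G f g n).take k) w = {a, b} := by
  classical
  have hn : 0 < n := by omega
  have hbnup : b ∈ nup G f a := mem_nup.mpr ⟨hadj, hab⟩
  set K := pcode f n a b with hK
  have hKlt : K < n * n := by
    have := procSet_all (G := G) hn hfn a
    have hmem : b ∈ procSet G f n (n * n) a := by rw [this]; exact hbnup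
    exact (mem_procSet.mp hmem).2
  obtain ⟨L, hL⟩ := phase1_prefix G f g n (K + 1) (n * n) (by omega)
  refine ⟨(phase1 G f g n (K + 1)).length, a, ?_⟩
  have htake : (phase1 G f g n (n * n) ++ phase2 G f g n).take
      (phase1 G f g n (K + 1)).length = phase1 G f g n (K + 1) := by
    rw [hL, List.append_assoc]
    exact List.take_left
  rw [htake, runCircuit_eq_foldl, inv1 G f g n hn hfn hgf hfg hlink (K + 1) (by omega)]
  have hins : procSet G f n (K + 1) a
      = insert b ((nup G f a).filter (fun u => f u < f b)) :=
    procSet_insert hn hfn hgf hbnup rfl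
  have hsup : (insert b ((nup G f a).filter (fun u => f u < f b))).sup f = f b := by
    rw [Finset.sup_insert]
    refine sup_eq_left.mpr (Finset.sup_le ?_)
    intro u hu
    exact le_of_lt (Finset.mem_filter.mp hu).2
  rw [stateAt, hins, if_pos ⟨b, Finset.mem_insert_self _ _⟩, hsup, hgf]

open scoped Classical in
lemma card_E (G : SimpleGraph V) (f : V → ℕ) (hinj : Function.Injective f) :
    (Finset.univ.filter (fun p : V × V => G.Adj p.1 p.2 ∧ f p.1 < f p.2)).card
      = Nat.card G.edgeSet := by
  classical
  rw [Nat.card_eq_fintype_card, ← SimpleGraph.edgeFinset_card]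
  refine Finset.card_bij (fun (p : V × V) _ => s(p.1, p.2)) ?_ ?_ ?_
  · intro p hp
    rw [Finset.mem_filter] at hp
    rw [SimpleGraph.mem_edgeFinset, SimpleGraph.mem_edgeSet]
    exact hp.2.1
  · intro p hp q hq hpq
    rw [Finset.mem_filter] at hp hq
    rw [Sym2.eq_iff] at hpq
    rcases hpq with ⟨h1, h2⟩ | ⟨h1, h2⟩
    · exact Prod.ext h1 h2
    · exfalso
      have := hp.2.2
      have := hq.2.2
      rw [← h1, ← h2] at *
      omega
  · intro e he
    rw [SimpleGraph.mem_edgeFinset] at he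
    induction e with
    | _ x y =>
      rw [SimpleGraph.mem_edgeSet] at he
      have hne : f x ≠ f y := fun h => G.ne_of_adj he (hinj h)
      rcases lt_or_gt_of_ne hne with h | h
      · exact ⟨(x, y), Finset.mem_filter.mpr ⟨Finset.mem_univ _, he, h⟩, rfl⟩
      · exact ⟨(y, x), Finset.mem_filter.mpr ⟨Finset.mem_univ _, he.symm, h⟩, Sym2.eq_swap⟩

end

/-- A biconnected graph (connected, and still connected after deleting any single
vertex) with `n` vertices and `m` edges admitting a perfect cancellation ordering has
a graphic parity network of size `m + n − 1`. -/
theorem stmt11 {V : Type*} [Fintype V] [DecidableEq V] (G : SimpleGraph V)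
    (hconn : G.Connected) (hbi : ∀ v : V, (G.induce {u : V | u ≠ v}).Connected)
    (σ : V ≃ Fin (Fintype.card V)) (hσ : IsPCO G σ) :
    ∃ C : List (V × V), IsGPN G C ∧
      C.length = Nat.card G.edgeSet + Fintype.card V - 1 := by
  classical
  have hne : Nonempty V := hconn.nonempty
  have hn : 0 < Fintype.card V := Fintype.card_pos
  have hn2 : 2 ≤ Fintype.card V := by
    obtain ⟨v0⟩ := hne
    obtain ⟨⟨u, hu⟩⟩ := (hbi v0).nonempty
    have : Nontrivial V := ⟨⟨u, v0, hu⟩⟩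
    exact Fintype.one_lt_card
  obtain ⟨f, hf⟩ : ∃ f : V → ℕ, f = fun v => ((σ v : Fin (Fintype.card V)) : ℕ) :=
    ⟨_, rfl⟩
  obtain ⟨g, hgdef⟩ :
      ∃ g : ℕ → V, g = fun k => σ.symm ⟨k % Fintype.card V, Nat.mod_lt _ hn⟩ :=
    ⟨_, rfl⟩
  have hfn : ∀ v, f v < Fintype.card V := by
    intro v
    simp only [hf]
    exact (σ v).isLt
  have hgf : ∀ v, g (f v) = v := by
    intro v
    simp only [hf, hgdef]
    have h1 : (⟨((σ v : Fin (Fintype.card V)) : ℕ) % Fintype.card V,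
        Nat.mod_lt _ hn⟩ : Fin (Fintype.card V)) = σ v := by
      apply Fin.ext
      simp [Nat.mod_eq_of_lt (σ v).isLt]
    rw [h1, Equiv.symm_apply_apply]
  have hfg : ∀ k, k < Fintype.card V → f (g k) = k := by
    intro k hk
    simp only [hf, hgdef]
    rw [Equiv.apply_symm_apply]
    simp [Nat.mod_eq_of_lt hk]
  have hinj : Function.Injective f := fun x y h => by rw [← hgf x, h, hgf y]
  have hltiff : ∀ x y : V, f x < f y ↔ σ x < σ y := by
    intro x y
    simp only [hf]
    exact Fin.lt_def.symm
  have hlink : ∀ v a b : V, a ∈ nup G f v → b ∈ nup G f v → f a < f b →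
      (∀ w ∈ nup G f v, ¬(f a < f w ∧ f w < f b)) → G.Adj a b := by
    intro v a b ha hb hab hbet
    rw [mem_nup] at ha hb
    obtain ⟨hva, hfva⟩ := ha
    obtain ⟨hvb, hfvb⟩ := hb
    have hAK : a ∈ Subtype.val ''
        ((G.induce {u : V | u ≠ v}).connectedComponentMk ⟨a, hva.ne'⟩).supp :=
      ⟨⟨a, hva.ne'⟩, (SimpleGraph.ConnectedComponent.mem_supp_iff _ _).mpr rfl, rfl⟩
    have hreach := (hbi v).preconnected ⟨a, hva.ne'⟩ ⟨b, hvb.ne'⟩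
    have hBK : b ∈ Subtype.val ''
        ((G.induce {u : V | u ≠ v}).connectedComponentMk ⟨a, hva.ne'⟩).supp := by
      refine ⟨⟨b, hvb.ne'⟩, ?_, rfl⟩
      rw [SimpleGraph.ConnectedComponent.mem_supp_iff]
      exact SimpleGraph.ConnectedComponent.sound hreach.symm
    apply hσ v ((G.induce {u : V | u ≠ v}).connectedComponentMk ⟨a, hva.ne'⟩)
    · exact ⟨⟨hva, (hltiff v a).mp hfva⟩, hAK⟩
    · exact ⟨⟨hvb, (hltiff v b).mp hfvb⟩, hBK⟩
    · exact (hltiff a b).mp hab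
    · intro w hw hcontra
      have hwnup : w ∈ nup G f v :=
        mem_nup.mpr ⟨hw.1.1, (hltiff v w).mpr hw.1.2⟩
      exact hbet w hwnup ⟨(hltiff a w).mpr hcontra.1, (hltiff w b).mpr hcontra.2⟩
  refine ⟨phase1 G f g (Fintype.card V) (Fintype.card V * Fintype.card V)
      ++ phase2 G f g (Fintype.card V),
    ⟨gate_valid G f g (Fintype.card V) hn2 hfn hgf hfg hconn hlink hinj, ?_,
      run_final G f g (Fintype.card V) hn2 hfn hgf hfg hconn hlink hinj⟩, ?_⟩
  · intro u v huv
    have hneq : f u ≠ f v := fun h => (G.ne_of_adj huv) (hinj h)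
    rcases lt_or_gt_of_ne hneq with h | h
    · exact coverage G f g (Fintype.card V) hn2 hfn hgf hfg hlink huv h
    · obtain ⟨k, w, hw⟩ :=
        coverage G f g (Fintype.card V) hn2 hfn hgf hfg hlink huv.symm h
      refine ⟨k, w, ?_⟩
      rw [hw]
      exact (Finset.pair_comm v u)
  · rw [List.length_append]
    have hl2 : (phase2 G f g (Fintype.card V)).length = Fintype.card V - 1 := by
      simp [phase2]
    have hl1 := len1 G f g (Fintype.card V) hn hfn hgf hfg
      (Fintype.card V * Fintype.card V) le_rfl
    have hfull : ((Finset.univ.filter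
          (fun p : V × V => G.Adj p.1 p.2 ∧ f p.1 < f p.2)).filter
          (fun p => pcode f (Fintype.card V) p.1 p.2 < Fintype.card V * Fintype.card V))
        = Finset.univ.filter (fun p : V × V => G.Adj p.1 p.2 ∧ f p.1 < f p.2) := by
      apply Finset.filter_eq_self.mpr
      intro p hp
      rw [Finset.mem_filter] at hp
      have hpn : p.2 ∈ nup G f p.1 := mem_nup.mpr ⟨hp.2.1, hp.2.2⟩
      have hall := procSet_all (G := G) hn hfn p.1
      have hmem : p.2 ∈ procSet G f (Fintype.card V)
          (Fintype.card V * Fintype.card V) p.1 := by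
        rw [hall]
        exact hpn
      exact (mem_procSet.mp hmem).2
    rw [hl1, hfull, card_E G f hinj, hl2]
    omega
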